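/- Let V be an n-dimensional real inner product space, K a self-adjoint operator on V, and W a k-dimensional subspace. For any s ≤ k with orthonormal basis e₁,...,e_k of W, unit vector u orthogonal to W, and the curve of subspaces W_ε spanned by e₁,...,e_{s-1}, (e_s + ε u)/√(1+ε²), e_{s+1},...,e_k, the derivative at ε = 0 of the W_ε-trace of K equals 2⟨K e_s, u⟩. -/

import Mathlib

open scoped RealInnerProductSpace

/-- First variation of the trace functional on the Grassmannian: rotating one basis
vector `e s` towards a unit normal `u`, the derivative at `ε = 0` of the trace of `K`
over the rotated subspace is `2 ⟪K (e s), u⟫`. -/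
theorem stmt_2
    {V : Type*} [NormedAddCommGroup V] [InnerProductSpace ℝ V]
    [FiniteDimensional ℝ V]
    {k : ℕ}
    (K : V →ₗ[ℝ] V) (hK : K.IsSymmetric)
    (e : Fin k → V) (he : Orthonormal ℝ e)
    (u : V) (hu : ‖u‖ = 1) (hue : ∀ i, ⟪u, e i⟫ = 0)
    (s : Fin k) :
    HasDerivAt
      (fun ε : ℝ => ∑ i : Fin k,
        ⟪K (if i = s then (Real.sqrt (1 + ε ^ 2))⁻¹ • (e s + ε • u) else e i),
          (if i = s then (Real.sqrt (1 + ε ^ 2))⁻¹ • (e s + ε • u) else e i)⟫)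
      (2 * ⟪K (e s), u⟫) 0 := by
  set a := ⟪K (e s), e s⟫ with ha
  set b := ⟪K (e s), u⟫ with hb
  set c := ⟪K u, u⟫ with hc
  have hfun : (fun ε : ℝ => ∑ i : Fin k,
        ⟪K (if i = s then (Real.sqrt (1 + ε ^ 2))⁻¹ • (e s + ε • u) else e i),
          (if i = s then (Real.sqrt (1 + ε ^ 2))⁻¹ • (e s + ε • u) else e i)⟫)
      = fun ε : ℝ =>
        (∑ i ∈ Finset.univ.erase s, ⟪K (e i), e i⟫)
        + (1 + ε ^ 2)⁻¹ * (a + ε * (2 * b) + ε ^ 2 * c) := by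
    funext ε
    have hpos : (0:ℝ) < 1 + ε ^ 2 := by positivity
    rw [← Finset.add_sum_erase _ _ (Finset.mem_univ s), add_comm]
    congr 1
    · refine Finset.sum_congr rfl fun i hi => ?_
      rw [if_neg (Finset.ne_of_mem_erase hi)]
    · rw [if_pos rfl]
      have hsq : ((Real.sqrt (1 + ε ^ 2))⁻¹) ^ 2 = (1 + ε ^ 2)⁻¹ := by
        rw [sq, ← mul_inv, Real.mul_self_sqrt hpos.le]
      have hsym : ⟪K u, e s⟫ = b := by
        rw [hK u (e s), real_inner_comm, hb]
      simp only [map_smul, map_add, inner_smul_left, inner_smul_right, inner_add_left,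
        inner_add_right, RCLike.conj_to_real]
      rw [hsym]
      ring_nf
      rw [hsq]
      ring
  rw [hfun]
  have h1 : HasDerivAt (fun ε : ℝ => (1 + ε ^ 2)⁻¹) 0 0 := by
    have : HasDerivAt (fun ε : ℝ => 1 + ε ^ 2) 0 0 := by
      simpa using ((hasDerivAt_pow 2 (0:ℝ)).const_add 1)
    simpa [Pi.inv_def] using this.inv (by norm_num)
  have h2 : HasDerivAt (fun ε : ℝ => a + ε * (2 * b) + ε ^ 2 * c) (2 * b) 0 := by
    have := (((hasDerivAt_id (0:ℝ)).mul_const (2*b)).const_add a).add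
      ((hasDerivAt_pow 2 (0:ℝ)).mul_const c)
    simpa [Pi.add_def] using this
  have := (h1.mul h2).const_add (∑ i ∈ Finset.univ.erase s, ⟪K (e i), e i⟫)
  simpa using this
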